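/- Let A be a finite nonempty poset and let N(A) be its nerve, the set of nonempty chains of A partially ordered by inclusion. The map f : N(A) → A sending a chain C to its maximum element max C is monotone, surjective, and satisfies f '' {D ∈ N(A) : C ⊆ D} = {a ∈ A : f(C) ≤ a} for every C ∈ N(A); that is, f is a surjective p-morphism from N(A) onto A. -/

import Mathlib

open Set

/-- A polytope in ℝⁿ: the convex hull of a finite set of points. -/
def IsPolytope {n : ℕ} (s : Set (Fin n → ℝ)) : Prop :=
  ∃ V : Finset (Fin n → ℝ), s = convexHull ℝ (V : Set (Fin n → ℝ))

/-- A polyhedron in ℝⁿ: a finite union of polytopes. -/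
def IsPolyhedron {n : ℕ} (P : Set (Fin n → ℝ)) : Prop :=
  ∃ S : Set (Set (Fin n → ℝ)), S.Finite ∧ (∀ s ∈ S, IsPolytope s) ∧ P = ⋃₀ S

/-- A simplex in ℝⁿ: the convex hull of a nonempty finite affinely independent set. -/
def IsSimplex {n : ℕ} (s : Set (Fin n → ℝ)) : Prop :=
  ∃ V : Finset (Fin n → ℝ), V.Nonempty ∧
    AffineIndependent ℝ (fun x : {x : Fin n → ℝ // x ∈ V} => x.val) ∧
    s = convexHull ℝ (V : Set (Fin n → ℝ))

/-- `IsFaceOf s t`: `t` is a simplex with vertex set `W` and `s` is the convex hull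
of a nonempty subset of `W`. -/
def IsFaceOf {n : ℕ} (s t : Set (Fin n → ℝ)) : Prop :=
  ∃ W V : Finset (Fin n → ℝ), W.Nonempty ∧
    AffineIndependent ℝ (fun x : {x : Fin n → ℝ // x ∈ W} => x.val) ∧
    t = convexHull ℝ (W : Set (Fin n → ℝ)) ∧
    V.Nonempty ∧ V ⊆ W ∧ s = convexHull ℝ (V : Set (Fin n → ℝ))

/-- A triangulation in ℝⁿ: a finite set of simplices closed under taking faces, such that
any two members intersect in a common face (or not at all). -/
structure IsTriangulation {n : ℕ} (K : Set (Set (Fin n → ℝ))) : Prop where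
  finite : K.Finite
  simplex : ∀ s ∈ K, IsSimplex s
  face_mem : ∀ s ∈ K, ∀ t, IsFaceOf t s → t ∈ K
  inter : ∀ s ∈ K, ∀ t ∈ K, s ∩ t = ∅ ∨ (IsFaceOf (s ∩ t) s ∧ IsFaceOf (s ∩ t) t)

/-- A set of simplices closed under taking faces. -/
def FaceClosed {n : ℕ} (D : Set (Set (Fin n → ℝ))) : Prop :=
  ∀ s ∈ D, ∀ t, IsFaceOf t s → t ∈ D

/-- A `K`-definable polyhedron: the union of a face-closed subset of `K`. -/
def SigmaDefinable {n : ℕ} (K : Set (Set (Fin n → ℝ))) (C : Set (Fin n → ℝ)) : Prop :=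
  ∃ D ⊆ K, FaceClosed D ∧ C = ⋃₀ D

/-- A `K`-definable open set: the complement in `|K| = ⋃₀ K` of a `K`-definable polyhedron. -/
def SigmaDefOpen {n : ℕ} (K : Set (Set (Fin n → ℝ))) (O : Set (Fin n → ℝ)) : Prop :=
  ∃ C, SigmaDefinable K C ∧ O = ⋃₀ K \ C

/-- The open star of a simplex `s` in a triangulation `K`. -/
def openStar {n : ℕ} (K : Set (Set (Fin n → ℝ))) (s : Set (Fin n → ℝ)) : Set (Fin n → ℝ) :=
  ⋃ t ∈ {t ∈ K | s ⊆ t}, intrinsicInterior ℝ t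

/-- The interior of `S` in the subspace topology of `P`, viewed as a subset of ℝⁿ. -/
def intSub {n : ℕ} (P S : Set (Fin n → ℝ)) : Set (Fin n → ℝ) :=
  Subtype.val '' interior (Subtype.val ⁻¹' S : Set P)

/-- An open subpolyhedron of a polyhedron `P`: a subset of `P` whose complement in `P`
is a polyhedron. -/
def IsOpenSubpoly {n : ℕ} (P O : Set (Fin n → ℝ)) : Prop :=
  O ⊆ P ∧ IsPolyhedron (P \ O)

/-- `s` is a simplex with exactly `k` (affinely independent) vertices. -/
def SimplexWithCard {n : ℕ} (s : Set (Fin n → ℝ)) (k : ℕ) : Prop :=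
  ∃ V : Finset (Fin n → ℝ), V.Nonempty ∧
    AffineIndependent ℝ (fun x : {x : Fin n → ℝ // x ∈ V} => x.val) ∧
    s = convexHull ℝ (V : Set (Fin n → ℝ)) ∧ V.card = k

/-- `P` contains a simplex with `d+1` affinely independent vertices, and no simplex with more;
i.e. the polyhedron `P` has dimension exactly `d`. -/
def PolyDimEq {n : ℕ} (P : Set (Fin n → ℝ)) (d : ℕ) : Prop :=
  (∃ V : Finset (Fin n → ℝ), V.Nonempty ∧
      AffineIndependent ℝ (fun x : {x : Fin n → ℝ // x ∈ V} => x.val) ∧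
      convexHull ℝ (V : Set (Fin n → ℝ)) ⊆ P ∧ V.card = d + 1) ∧
  (∀ V : Finset (Fin n → ℝ),
      AffineIndependent ℝ (fun x : {x : Fin n → ℝ // x ∈ V} => x.val) →
      convexHull ℝ (V : Set (Fin n → ℝ)) ⊆ P → V.card ≤ d + 1)

/-- The polyhedron `P` has dimension at most `d`. -/
def PolyDimLE {n : ℕ} (P : Set (Fin n → ℝ)) (d : ℕ) : Prop :=
  ∀ V : Finset (Fin n → ℝ),
    AffineIndependent ℝ (fun x : {x : Fin n → ℝ // x ∈ V} => x.val) →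
    convexHull ℝ (V : Set (Fin n → ℝ)) ⊆ P → V.card ≤ d + 1

/-- The triangulation `K` has combinatorial dimension exactly `d`. -/
def TriangDimEq {n : ℕ} (K : Set (Set (Fin n → ℝ))) (d : ℕ) : Prop :=
  (∃ s ∈ K, SimplexWithCard s (d + 1)) ∧
  (∀ s ∈ K, ∀ k, SimplexWithCard s k → k ≤ d + 1)

/-- The bounded-depth terms: `bdTerm P k V = V k ∪ (V k ⇨ bdTerm P (k-1) V)`,
where `U ⇨ W = int_P ((P \ U) ∪ W)` is the Heyting implication of open subsets of `P`. -/
def bdTerm {n : ℕ} (P : Set (Fin n → ℝ)) :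
    (k : ℕ) → (Fin (k + 1) → Set (Fin n → ℝ)) → Set (Fin n → ℝ)
  | 0, V => V 0 ∪ intSub P (P \ V 0)
  | k + 1, V => V (Fin.last (k + 1)) ∪
      intSub P ((P \ V (Fin.last (k + 1))) ∪ bdTerm P k (fun i => V i.castSucc))

/-- The finite poset `A` has depth exactly `d`: it has a chain of cardinality `d+1`
and no longer chain. -/
def depthEq (A : Type) [PartialOrder A] (d : ℕ) : Prop :=
  (∃ C : Finset A, IsChain (· ≤ ·) (C : Set A) ∧ C.card = d + 1) ∧
  (∀ C : Finset A, IsChain (· ≤ ·) (C : Set A) → C.card ≤ d + 1)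

/-- An upper set of the poset `(K, ⊆)`. -/
def UpperSetOf {n : ℕ} (K U : Set (Set (Fin n → ℝ))) : Prop :=
  U ⊆ K ∧ ∀ s ∈ U, ∀ t ∈ K, s ⊆ t → t ∈ U

/-- The map sending an upper set of a triangulation to the union of the relative
interiors of its members. -/
def gammaUp {n : ℕ} (U : Set (Set (Fin n → ℝ))) : Set (Fin n → ℝ) :=
  ⋃ s ∈ U, intrinsicInterior ℝ s
lemma chain_has_greatest {A : Type} [PartialOrder A] (C : Finset A)
    (hne : C.Nonempty) (hc : IsChain (· ≤ ·) (C : Set A)) :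
    ∃ m ∈ C, ∀ x ∈ C, x ≤ m := by
  obtain ⟨m, hm, hmax⟩ := C.exists_maximal hne
  refine ⟨m, hm, fun x hx => ?_⟩
  rcases eq_or_ne x m with rfl | hne'
  · exact le_refl x
  · rcases hc hx hm hne' with h | h
    · exact h
    · exact absurd (lt_of_le_of_ne h (Ne.symm hne')) (not_lt_of_ge (hmax hx h))

/-- For a finite nonempty poset `A`, the map `f` from the nerve of `A`
(the nonempty chains of `A`, ordered by inclusion) to `A` sending a chain to its maximum
element is monotone, surjective, and satisfies `f '' ↑C = ↑(f C)` for every chain `C`;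
i.e. `f` is a surjective p-morphism from `N(A)` onto `A`. -/
theorem nerve_pmorphism {A : Type} [PartialOrder A] [Fintype A] [Nonempty A] :
    ∃ f : {C : Finset A // C.Nonempty ∧ IsChain (· ≤ ·) (C : Set A)} → A,
      (∀ C, f C ∈ C.val ∧ ∀ x ∈ C.val, x ≤ f C) ∧
      (∀ C D, C.val ⊆ D.val → f C ≤ f D) ∧
      Function.Surjective f ∧
      (∀ C, f '' {D | C.val ⊆ D.val} = {a | f C ≤ a}) := by
  classical
  set N := {C : Finset A // C.Nonempty ∧ IsChain (· ≤ ·) (C : Set A)}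
  have hgr : ∀ C : N, ∃ m ∈ C.val, ∀ x ∈ C.val, x ≤ m :=
    fun C => chain_has_greatest C.val C.2.1 C.2.2
  choose f hf1 hf2 using hgr
  have hmono : ∀ C D : N, C.val ⊆ D.val → f C ≤ f D :=
    fun C D h => hf2 D (f C) (h (hf1 C))
  refine ⟨f, fun C => ⟨hf1 C, hf2 C⟩, hmono, ?_, ?_⟩
  · intro a
    refine ⟨⟨{a}, Finset.singleton_nonempty a, ?_⟩, ?_⟩
    · simp [Set.Subsingleton.isChain]
    · have := hf1 ⟨{a}, Finset.singleton_nonempty a, by simp [Set.Subsingleton.isChain]⟩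
      simpa using this
  · intro C
    ext a
    simp only [Set.mem_image, Set.mem_setOf_eq]
    constructor
    · rintro ⟨D, hCD, rfl⟩; exact hmono C D hCD
    · intro ha
      have hchain : IsChain (· ≤ ·) ((insert a C.val : Finset A) : Set A) := by
        intro x hx y hy hxy
        simp only [Finset.coe_insert, Set.mem_insert_iff, Finset.mem_coe] at hx hy
        rcases hx with rfl | hx
        · rcases hy with rfl | hy
          · exact absurd rfl hxy
          · exact Or.inr (le_trans (hf2 C y hy) ha)
        · rcases hy with rfl | hy
          · exact Or.inl (le_trans (hf2 C x hx) ha)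
          · exact C.2.2 hx hy hxy
      set D : N := ⟨insert a C.val, ⟨a, Finset.mem_insert_self a _⟩, hchain⟩
      refine ⟨D, fun x hx => Finset.mem_insert_of_mem hx, ?_⟩
      have h1 : f D ≤ a := by
        have := hf1 D
        rcases Finset.mem_insert.mp this with h | h
        · exact le_of_eq h
        · exact le_trans (hf2 C _ h) ha
      exact le_antisymm h1 (hf2 D a (Finset.mem_insert_self a _))
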